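/- Let n and k be positive integers, let p₁, …, p_n ∈ (0,1], and let x₁, …, x_n be independent random variables with x_j distributed as NB(k, p_j). Set W = ∏_{j=1}^n (x_j / k). Then E[W] = ∏_{j=1}^n (1/p_j) and Var[W] / E[W]² ≤ (1 + 1/k)^n − 1. -/

import Mathlib

open MeasureTheory ProbabilityTheory

/-- The negative binomial pmf `NB(k,p)` on ℕ:
`C(m-1, k-1) pᵏ (1-p)^{m-k}` for `m ≥ k`, and `0` otherwise. -/
noncomputable def nbPmf (k : ℕ) (p : ℝ) : ℕ → ℝ := fun m =>
  if k ≤ m then ((m - 1).choose (k - 1) : ℝ) * p ^ k * (1 - p) ^ (m - k) else 0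

lemma nbPmf_zero_of_lt {k : ℕ} {p : ℝ} {m : ℕ} (h : m < k) : nbPmf k p m = 0 := by
  simp [nbPmf, Nat.not_le.mpr h]

lemma hasSum_of_shift {f : ℕ → ℝ} {d : ℕ} (h0 : ∀ i < d, f i = 0) {c : ℝ}
    (h : HasSum (fun n => f (n + d)) c) : HasSum f c := by
  have := (hasSum_nat_add_iff d).mp h
  rwa [Finset.sum_eq_zero (fun i hi => h0 i (Finset.mem_range.mp hi)), add_zero] at this

lemma hasSum_shift {f : ℕ → ℝ} {d : ℕ} (h0 : ∀ i < d, f i = 0) {c : ℝ}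
    (h : HasSum f c) : HasSum (fun n => f (n + d)) c := by
  have := (hasSum_nat_add_iff' (f := f) d (g := c)).mpr h
  rwa [Finset.sum_eq_zero (fun i hi => h0 i (Finset.mem_range.mp hi)), sub_zero] at this

lemma nbPmf_hasSum {k : ℕ} (hk : 0 < k) {p : ℝ} (hp : p ∈ Set.Ioc (0:ℝ) 1) :
    HasSum (nbPmf k p) 1 := by
  obtain ⟨K, rfl⟩ : ∃ K, k = K + 1 := ⟨k - 1, by omega⟩
  obtain ⟨hp0, hp1⟩ := hp
  have hq : ‖1 - p‖ < 1 := by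
    rw [Real.norm_eq_abs, abs_lt]; constructor <;> linarith
  have h := hasSum_choose_mul_geometric_of_norm_lt_one (𝕜 := ℝ) K hq
  rw [sub_sub_cancel] at h
  have h2 := h.mul_left (p ^ (K + 1))
  have hpK : p ^ (K + 1) ≠ 0 := pow_ne_zero _ (ne_of_gt hp0)
  rw [mul_one_div, div_self hpK] at h2
  apply hasSum_of_shift (fun i hi => nbPmf_zero_of_lt hi)
  convert h2 using 2 with m
  · rfl
  have e1 : m + (K + 1) - 1 = m + K := by omega
  have e2 : m + (K + 1) - (K + 1) = m := by omega
  simp only [nbPmf]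
  rw [if_pos (by omega : K + 1 <= m + (K + 1)), e1, e2, Nat.add_sub_cancel]
  ring

lemma nbPmf_hasSum_shifted {k : ℕ} (hk : 0 < k) {p : ℝ} (hp : p ∈ Set.Ioc (0:ℝ) 1) {d : ℕ}
    (hd : d ≤ k) : HasSum (fun m => nbPmf k p (m + d)) 1 := by
  have h0 : ∀ i < d, nbPmf k p i = 0 := fun i hi => nbPmf_zero_of_lt (by omega)
  exact hasSum_shift h0 (nbPmf_hasSum hk hp)

lemma nb_mean_identity {K : ℕ} {p : ℝ} (hp0 : p ≠ 0) (m : ℕ) :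
    (m : ℝ) * nbPmf (K + 1) p m = (((K:ℝ)+1)/p) * nbPmf (K + 2) p (m + 1) := by
  by_cases hm : K + 1 ≤ m
  · obtain ⟨d, rfl⟩ : ∃ d, m = d + (K + 1) := ⟨m - (K+1), by omega⟩
    simp only [nbPmf]
    rw [if_pos (by omega : K + 1 ≤ d + (K + 1)), if_pos (by omega : K + 2 ≤ d + (K + 1) + 1)]
    rw [show d + (K+1) - 1 = d + K from by omega, show (K+1) - 1 = K from by omega,
      show d + (K+1) - (K+1) = d from by omega, show d + (K+1) + 1 - 1 = d + K + 1 from by omega,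
      show (K+2) - 1 = K + 1 from by omega, show d + (K+1) + 1 - (K+2) = d from by omega]
    have hnat : (d+K+1) * (d+K).choose K = (d+K+1).choose (K+1) * (K+1) :=
      Nat.add_one_mul_choose_eq (d+K) K
    have key : ((d:ℝ)+K+1) * ((d+K).choose K : ℝ) = ((d+K+1).choose (K+1) : ℝ) * ((K:ℝ)+1) := by
      exact_mod_cast hnat
    rw [div_mul_eq_mul_div, eq_div_iff hp0]
    push_cast
    linear_combination ((1-p)^d * p^(K+1) * p) * key
  · rw [nbPmf, nbPmf, if_neg hm, if_neg (by omega : ¬ (K + 2 ≤ m + 1))]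
    ring

lemma nb_sq_identity {K : ℕ} {p : ℝ} (hp0 : p ≠ 0) (m : ℕ) :
    (m : ℝ)^2 * nbPmf (K + 1) p m
      = ((((K:ℝ)+1)*((K:ℝ)+2))/p^2) * nbPmf (K + 3) p (m + 2)
        - (((K:ℝ)+1)/p) * nbPmf (K + 2) p (m + 1) := by
  by_cases hm : K + 1 ≤ m
  · obtain ⟨d, rfl⟩ : ∃ d, m = d + (K + 1) := ⟨m - (K+1), by omega⟩
    simp only [nbPmf]
    rw [if_pos (by omega : K + 1 ≤ d + (K + 1)), if_pos (by omega : K + 3 ≤ d + (K + 1) + 2),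
      if_pos (by omega : K + 2 ≤ d + (K + 1) + 1)]
    rw [show d + (K+1) - 1 = d + K from by omega, show (K+1) - 1 = K from by omega,
      show d + (K+1) - (K+1) = d from by omega,
      show d + (K+1) + 2 - 1 = d + K + 2 from by omega, show (K+3) - 1 = K + 2 from by omega,
      show d + (K+1) + 2 - (K+3) = d from by omega,
      show d + (K+1) + 1 - 1 = d + K + 1 from by omega, show (K+2) - 1 = K + 1 from by omega,
      show d + (K+1) + 1 - (K+2) = d from by omega]
    have hnat1 : (d+K+1) * (d+K).choose K = (d+K+1).choose (K+1) * (K+1) :=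
      Nat.add_one_mul_choose_eq (d+K) K
    have key1 : ((d:ℝ)+K+1) * ((d+K).choose K : ℝ) = ((d+K+1).choose (K+1) : ℝ) * ((K:ℝ)+1) := by
      exact_mod_cast hnat1
    have hnat2 : (d+K+2) * (d+K+1).choose (K+1) = (d+K+2).choose (K+2) * (K+2) :=
      Nat.add_one_mul_choose_eq (d+K+1) (K+1)
    have key2 : ((d:ℝ)+K+2) * ((d+K+1).choose (K+1) : ℝ)
        = ((d+K+2).choose (K+2) : ℝ) * ((K:ℝ)+2) := by
      exact_mod_cast hnat2
    have main : ((d:ℝ)+K+1)^2 * ((d+K).choose K : ℝ)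
        = ((K:ℝ)+1)*((K:ℝ)+2)*((d+K+2).choose (K+2) : ℝ)
          - ((K:ℝ)+1)*((d+K+1).choose (K+1) : ℝ) := by
      linear_combination ((d:ℝ)+K+1) * key1 + ((K:ℝ)+1) * key2
    rw [div_mul_eq_mul_div, div_mul_eq_mul_div,
      div_sub_div _ _ (pow_ne_zero 2 hp0) hp0, eq_div_iff (mul_ne_zero (pow_ne_zero 2 hp0) hp0)]
    push_cast
    linear_combination ((1-p)^d * p^(K+1) * p^3) * main
  · rw [nbPmf, nbPmf, nbPmf, if_neg hm, if_neg (by omega : ¬ (K + 3 ≤ m + 2)),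
      if_neg (by omega : ¬ (K + 2 ≤ m + 1))]
    ring

lemma nb_hasSum_mean {K : ℕ} {p : ℝ} (hp : p ∈ Set.Ioc (0:ℝ) 1) :
    HasSum (fun m : ℕ => (m:ℝ) * nbPmf (K + 1) p m) ((((K:ℝ)+1))/p) := by
  have h1 := nbPmf_hasSum_shifted (k := K + 2) (by omega) hp (d := 1) (by omega)
  have h2 := h1.mul_left (((K:ℝ)+1)/p)
  rw [mul_one] at h2
  rw [funext (nb_mean_identity (ne_of_gt hp.1))]
  exact h2

lemma nb_hasSum_sq {K : ℕ} {p : ℝ} (hp : p ∈ Set.Ioc (0:ℝ) 1) :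
    HasSum (fun m : ℕ => (m:ℝ)^2 * nbPmf (K + 1) p m)
      ((((K:ℝ)+1)*((K:ℝ)+2))/p^2 - (((K:ℝ)+1))/p) := by
  have h1 := nbPmf_hasSum_shifted (k := K + 3) (by omega) hp (d := 2) (by omega)
  have h2 := nbPmf_hasSum_shifted (k := K + 2) (by omega) hp (d := 1) (by omega)
  have h3 := (h1.mul_left ((((K:ℝ)+1)*((K:ℝ)+2))/p^2)).sub (h2.mul_left (((K:ℝ)+1)/p))
  rw [mul_one, mul_one] at h3
  rw [funext (nb_sq_identity (ne_of_gt hp.1))]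
  exact h3

lemma integral_comp_nat {Ω : Type*} [MeasurableSpace Ω] (μ : Measure Ω) [IsProbabilityMeasure μ]
    (x : Ω → ℕ) (hx : Measurable x) (f : ℕ → ℝ) (hf : ∀ m, 0 ≤ f m) {c : ℝ}
    (h : HasSum (fun m => f m * (μ (x ⁻¹' {m})).toReal) c) :
    Integrable (fun ω => f (x ω)) μ ∧ ∫ ω, f (x ω) ∂μ = c := by
  set ν := μ.map x with hνdef
  have hνP : IsProbabilityMeasure ν := Measure.isProbabilityMeasure_map hx.aemeasurable
  have hνm : ∀ m, ν {m} = μ (x ⁻¹' {m}) :=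
    fun m => Measure.map_apply hx (measurableSet_singleton m)
  have hfm : Measurable f := measurable_from_nat
  have hint : Integrable f ν := by
    refine ⟨hfm.aestronglyMeasurable, ?_⟩
    rw [hasFiniteIntegral_def, lintegral_countable']
    have heq : ∀ m : ℕ, (‖f m‖₊ : ENNReal) * ν {m}
        = ENNReal.ofReal (f m * (μ (x ⁻¹' {m})).toReal) := by
      intro m
      rw [ENNReal.ofReal_mul (hf m), ← enorm_eq_nnnorm, Real.enorm_eq_ofReal (hf m), hνm m,
        ENNReal.ofReal_toReal (measure_ne_top μ _)]
    calc ∑' m : ℕ, (‖f m‖₊ : ENNReal) * ν {m}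
        = ∑' m : ℕ, ENNReal.ofReal (f m * (μ (x ⁻¹' {m})).toReal) := by
          exact tsum_congr heq
      _ = ENNReal.ofReal c := by
          rw [← ENNReal.ofReal_tsum_of_nonneg
            (fun m => mul_nonneg (hf m) ENNReal.toReal_nonneg) h.summable, h.tsum_eq]
      _ < ⊤ := ENNReal.ofReal_lt_top
  have hio : Integrable (fun ω => f (x ω)) μ := by
    have := (integrable_map_measure hfm.aestronglyMeasurable hx.aemeasurable).mp hint
    exact this
  refine ⟨hio, ?_⟩
  have h1 : ∫ m, f m ∂ν = ∫ ω, f (x ω) ∂μ :=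
    integral_map hx.aemeasurable hfm.aestronglyMeasurable
  rw [← h1, integral_countable' hint, ← h.tsum_eq]
  refine tsum_congr fun m => ?_
  rw [measureReal_def, hνm m, smul_eq_mul, mul_comm]

lemma integral_prod_indep {Ω : Type*} [MeasurableSpace Ω] (μ : Measure Ω)
    [IsProbabilityMeasure μ] {n : ℕ} (Y : Fin n → Ω → ℝ) (hm : ∀ j, Measurable (Y j))
    (hind : iIndepFun Y μ) (hi : ∀ j, Integrable (Y j) μ)
    (s : Finset (Fin n)) :
    Integrable (fun ω => ∏ j ∈ s, Y j ω) μ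
      ∧ ∫ ω, ∏ j ∈ s, Y j ω ∂μ = ∏ j ∈ s, ∫ ω, Y j ω ∂μ := by
  classical
  induction s using Finset.induction_on with
  | empty => simp
  | @insert a s ha ih =>
    obtain ⟨ih1, ih2⟩ := ih
    have hprod : IndepFun (∏ j ∈ s, Y j) (Y a) μ :=
      hind.indepFun_finsetProd_of_notMem hm ha
    have hps : (fun ω => ∏ j ∈ s, Y j ω) = ∏ j ∈ s, Y j := by
      funext ω; simp [Finset.prod_apply]
    rw [hps] at ih1 ih2
    have hmul : Integrable ((∏ j ∈ s, Y j) * Y a) μ := hprod.integrable_mul ih1 (hi a)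
    have hintegral := hprod.integral_fun_mul_eq_mul_integral ih1.aestronglyMeasurable (hi a).aestronglyMeasurable
    have hins : (fun ω => ∏ j ∈ insert a s, Y j ω)
        = (∏ j ∈ s, Y j) * Y a := by
      funext ω
      simp only [Finset.prod_insert ha, Pi.mul_apply, Finset.prod_apply]
      ring
    constructor
    · rw [hins]; exact hmul
    · rw [hins]
      calc ∫ ω, ((∏ j ∈ s, Y j) * Y a) ω ∂μ
          = ∫ ω, (∏ j ∈ s, Y j) ω * Y a ω ∂μ := rfl
        _ = (∫ ω, (∏ j ∈ s, Y j) ω ∂μ) * ∫ ω, Y a ω ∂μ := hintegral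
        _ = ∏ j ∈ insert a s, ∫ ω, Y j ω ∂μ := by
            rw [Finset.prod_insert ha, ← ih2, mul_comm]

/-- For independent `xⱼ ∼ NB(k, pⱼ)` with `pⱼ ∈ (0,1]` and
`W = ∏ⱼ (xⱼ/k)`, one has `E[W] = ∏ⱼ 1/pⱼ` and
`Var[W]/E[W]² ≤ (1 + 1/k)ⁿ − 1`. -/
theorem nb_product_mean_and_relative_variance (n k : ℕ) (hn : 0 < n) (hk : 0 < k)
    (p : Fin n → ℝ) (hp : ∀ j, p j ∈ Set.Ioc (0 : ℝ) 1)
    {Ω : Type*} [MeasurableSpace Ω] (μ : Measure Ω) [IsProbabilityMeasure μ]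
    (x : Fin n → Ω → ℕ) (hmeas : ∀ j, Measurable (x j))
    (hindep : iIndepFun x μ)
    (hdist : ∀ j, ∀ m : ℕ, (μ (x j ⁻¹' {m})).toReal = nbPmf k (p j) m) :
    ∫ ω, ∏ j, (x j ω : ℝ) / k ∂μ = ∏ j, 1 / p j
    ∧ variance (fun ω => ∏ j, (x j ω : ℝ) / k) μ
          / (∫ ω, ∏ j, (x j ω : ℝ) / k ∂μ) ^ 2
        ≤ (1 + 1 / (k : ℝ)) ^ n - 1 := by
  classical
  obtain ⟨K, rfl⟩ : ∃ K, k = K + 1 := ⟨k - 1, by omega⟩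
  have hkR : ((K:ℝ) + 1) ≠ 0 := by positivity
  have hkcast : ((K + 1 : ℕ) : ℝ) = (K : ℝ) + 1 := by push_cast; ring
  set kR : ℝ := (K : ℝ) + 1 with hkRdef
  -- the one-variable functions
  set gY : ℕ → ℝ := fun a => (a : ℝ) / ((K + 1 : ℕ) : ℝ) with hgY
  set gZ : ℕ → ℝ := fun a => ((a : ℝ) / ((K + 1 : ℕ) : ℝ))^2 with hgZ
  set Y : Fin n → Ω → ℝ := fun j ω => gY (x j ω) with hY
  set Z : Fin n → Ω → ℝ := fun j ω => gZ (x j ω) with hZ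
  set m2 : Fin n → ℝ := fun j => (1 + (1 - p j) / kR) / (p j)^2 with hm2
  have hgYm : Measurable gY := measurable_from_nat
  have hgZm : Measurable gZ := measurable_from_nat
  have hYm : ∀ j, Measurable (Y j) := fun j => hgYm.comp (hmeas j)
  have hZm : ∀ j, Measurable (Z j) := fun j => hgZm.comp (hmeas j)
  have hYind : iIndepFun Y μ :=
    hindep.comp (fun _ => gY) (fun _ => hgYm)
  have hZind : iIndepFun Z μ :=
    hindep.comp (fun _ => gZ) (fun _ => hgZm)
  -- one-variable expectations
  have hYint : ∀ j, Integrable (Y j) μ ∧ ∫ ω, Y j ω ∂μ = 1 / p j := by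
    intro j
    refine integral_comp_nat μ (x j) (hmeas j) gY
      (fun m => by rw [hgY]; positivity) ?_
    have h1 := (nb_hasSum_mean (K := K) (hp j)).mul_left (1 / kR)
    have hfun : (fun m : ℕ => (1 / kR) * ((m:ℝ) * nbPmf (K + 1) (p j) m))
        = fun m : ℕ => gY m * (μ (x j ⁻¹' {m})).toReal := by
      funext m
      rw [hdist j m, hgY, hkcast, hkRdef]
      ring
    rw [hfun] at h1
    have hval : (1 / kR) * (((K:ℝ)+1) / p j) = 1 / p j := by
      rw [hkRdef]
      field_simp
    rwa [hval] at h1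
  have hZint : ∀ j, Integrable (Z j) μ ∧ ∫ ω, Z j ω ∂μ = m2 j := by
    intro j
    refine integral_comp_nat μ (x j) (hmeas j) gZ
      (fun m => by rw [hgZ]; positivity) ?_
    have h1 := (nb_hasSum_sq (K := K) (hp j)).mul_left (1 / kR^2)
    have hfun : (fun m : ℕ => (1 / kR^2) * ((m:ℝ)^2 * nbPmf (K + 1) (p j) m))
        = fun m : ℕ => gZ m * (μ (x j ⁻¹' {m})).toReal := by
      funext m
      rw [hdist j m, hgZ, hkcast, hkRdef]
      field_simp
    rw [hfun] at h1
    have hval : (1 / kR^2) * ((((K:ℝ)+1)*((K:ℝ)+2)) / (p j)^2 - ((K:ℝ)+1) / p j) = m2 j := by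
      have hpj := (hp j).1
      rw [hm2, hkRdef]
      field_simp
      ring
    rwa [hval] at h1
  -- products
  obtain ⟨hWint, hWeq⟩ := integral_prod_indep μ Y hYm hYind (fun j => (hYint j).1) Finset.univ
  obtain ⟨hW2int, hW2eq⟩ := integral_prod_indep μ Z hZm hZind (fun j => (hZint j).1) Finset.univ
  have hEW : ∫ ω, ∏ j, (x j ω : ℝ) / ((K + 1 : ℕ) : ℝ) ∂μ = ∏ j, 1 / p j := by
    rw [show (fun ω => ∏ j, (x j ω : ℝ) / ((K + 1 : ℕ) : ℝ)) = fun ω => ∏ j, Y j ω from rfl,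
      hWeq]
    exact Finset.prod_congr rfl fun j _ => (hYint j).2
  have hEZ : ∫ ω, ∏ j, Z j ω ∂μ = ∏ j, m2 j := by
    rw [hW2eq]; exact Finset.prod_congr rfl fun j _ => (hZint j).2
  refine ⟨hEW, ?_⟩
  -- variance
  set W : Ω → ℝ := fun ω => ∏ j, (x j ω : ℝ) / ((K + 1 : ℕ) : ℝ) with hWdef
  have hWZ : ∀ ω, W ω ^ 2 = ∏ j, Z j ω := by
    intro ω
    rw [hWdef, hZ, hgZ]
    rw [← Finset.prod_pow]
  have hWm : Measurable W := by
    apply Finset.measurable_prod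
    intro j _
    exact hYm j
  have hWsq : Integrable (fun ω => W ω ^ 2) μ := by
    rw [show (fun ω => W ω ^ 2) = fun ω => ∏ j, Z j ω from funext hWZ]
    exact hW2int
  have hmem : MemLp W 2 μ := (memLp_two_iff_integrable_sq hWm.aestronglyMeasurable).mpr hWsq
  have hvar : variance W μ = (∏ j, m2 j) - (∏ j, 1 / p j) ^ 2 := by
    rw [variance_eq_sub hmem]
    congr 1
    · rw [show (W ^ 2) = fun ω => ∏ j, Z j ω from funext fun ω => by
        simpa using hWZ ω]
      exact hEZ
    · rw [show ∫ ω, W ω ∂μ = ∏ j, 1 / p j from hEW]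
  rw [show variance (fun ω => ∏ j, (x j ω : ℝ) / ((K + 1 : ℕ) : ℝ)) μ = variance W μ from rfl,
    hvar, hEW]
  -- final bound
  have hB : (0:ℝ) < ∏ j, 1 / p j :=
    Finset.prod_pos fun j _ => by have := (hp j).1; positivity
  have hB2 : ((∏ j, 1 / p j) ^ 2 : ℝ) ≠ 0 := by positivity
  rw [sub_div, div_self hB2]
  have hquot : (∏ j, m2 j) / (∏ j, 1 / p j) ^ 2 = ∏ j, (1 + (1 - p j) / kR) := by
    rw [← Finset.prod_pow, ← Finset.prod_div_distrib]
    refine Finset.prod_congr rfl fun j _ => ?_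
    have hpj := (hp j).1
    simp only [hm2]
    have hpj2 : (p j)^2 ≠ 0 := by positivity
    field_simp
  rw [hquot]
  have hbound : ∏ j, (1 + (1 - p j) / kR) ≤ (1 + 1 / kR) ^ n := by
    calc ∏ j, (1 + (1 - p j) / kR)
        ≤ ∏ _j : Fin n, (1 + 1 / kR) := by
          refine Finset.prod_le_prod (fun j _ => ?_) (fun j _ => ?_)
          · have h1 := (hp j).1; have h2 := (hp j).2
            have : (0:ℝ) < kR := by rw [hkRdef]; positivity
            have : (0:ℝ) ≤ (1 - p j) / kR := by
              apply div_nonneg <;> linarith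
            linarith
          · have h1 := (hp j).1
            have hk0 : (0:ℝ) < kR := by rw [hkRdef]; positivity
            have : (1 - p j) / kR ≤ 1 / kR := by
              exact (div_le_div_iff_of_pos_right hk0).mpr (by linarith)
            linarith
      _ = (1 + 1 / kR) ^ n := by
          rw [Finset.prod_const, Finset.card_univ, Fintype.card_fin]
  have hfin : (1 + 1 / kR) = 1 + 1 / ((K + 1 : ℕ) : ℝ) := by
    rw [hkRdef, hkcast]
  linarith [hbound, hfin ▸ hbound]
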